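/- Let G be a graph with at least two vertices, let v be a vertex of G, and let G' be the graph obtained from G by adding a new vertex v' and the edge vv'. For a set S' of vertices of G': S' is a type I set for v' in G' with L_{S'}(v') = −1 if and only if S' ⊆ V(G), S' is a type I set for v in G, and L_{S'}(v) = 1. -/

import Mathlib

/-- A set of vertices is independent: no two of its vertices are adjacent. -/
def IndepSet {V : Type*} (G : SimpleGraph V) (S : Set V) : Prop :=
  ∀ u ∈ S, ∀ w ∈ S, ¬ G.Adj u w

/-- `S` is a type I set for `v` in `G`: `S` is independent, every vertex
`u ∉ S ∪ {v}` has at least one and at most two neighbors in `S`, and `v` either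
belongs to `S` or has at most two neighbors in `S`. -/
def TypeISet {V : Type*} (G : SimpleGraph V) (v : V) (S : Set V) : Prop :=
  IndepSet G S ∧
    (∀ u, u ∉ S → u ≠ v →
      1 ≤ (S ∩ G.neighborSet u).ncard ∧ (S ∩ G.neighborSet u).ncard ≤ 2) ∧
    (v ∈ S ∨ (S ∩ G.neighborSet v).ncard ≤ 2)

/-- The labeling `L_S(v) = l` : `0` if `v ∈ S`; `k ≥ 1` if `v ∉ S` and `v` has exactly
`k` neighbors in `S`; `-1` if `N[v] ∩ S = ∅` and every neighbor of `v` has exactly one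
neighbor in `S`; `-2` if `N[v] ∩ S = ∅` and some neighbor of `v` has exactly two
neighbors in `S`. -/
def HasLabel {V : Type*} (G : SimpleGraph V) (v : V) (S : Set V) (l : ℤ) : Prop :=
  (v ∈ S ∧ l = 0) ∨
  (v ∉ S ∧ ∃ k : ℕ, 1 ≤ k ∧ (S ∩ G.neighborSet v).ncard = k ∧ l = (k : ℤ)) ∨
  (v ∉ S ∧ S ∩ G.neighborSet v = ∅ ∧
    (∀ u ∈ G.neighborSet v, (S ∩ G.neighborSet u).ncard = 1) ∧ l = -1) ∨
  (v ∉ S ∧ S ∩ G.neighborSet v = ∅ ∧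
    (∃ u ∈ G.neighborSet v, (S ∩ G.neighborSet u).ncard = 2) ∧ l = -2)

/-- The star `K_{1,r}` with center `none` and the `r` leaves `some i`. -/
def starGraph (r : ℕ) : SimpleGraph (Option (Fin r)) where
  Adj a b := (a = none ∧ b ≠ none) ∨ (a ≠ none ∧ b = none)
  symm := ⟨by intro a b h; tauto⟩
  loopless := ⟨by intro a h; tauto⟩

/-- The graph obtained from `G` by adding a new vertex `none` adjacent only to `v`. -/
def addLeaf {V : Type*} (G : SimpleGraph V) (v : V) : SimpleGraph (Option V) where
  Adj a b := match a, b with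
    | some x, some y => G.Adj x y
    | none, some y => y = v
    | some x, none => x = v
    | none, none => False
  symm := by
    constructor
    intro a b h
    match a, b with
    | some x, some y => exact h.symm
    | none, some y => exact h
    | some x, none => exact h
    | none, none => exact h
  loopless := by
    constructor
    intro a h
    match a with
    | some x => exact G.loopless.irrefl x h
    | none => exact h

/-- The graph obtained from the disjoint union of `G` and `H` by adding the edge
between `v` (in `G`) and `v'` (in `H`). -/
def joinAt {V W : Type*} (G : SimpleGraph V) (H : SimpleGraph W) (v : V) (v' : W) :
    SimpleGraph (V ⊕ W) where
  Adj a b := match a, b with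
    | Sum.inl x, Sum.inl y => G.Adj x y
    | Sum.inr x, Sum.inr y => H.Adj x y
    | Sum.inl x, Sum.inr y => x = v ∧ y = v'
    | Sum.inr x, Sum.inl y => x = v' ∧ y = v
  symm := by
    constructor
    intro a b h
    match a, b with
    | Sum.inl x, Sum.inl y => exact h.symm
    | Sum.inr x, Sum.inr y => exact h.symm
    | Sum.inl x, Sum.inr y => exact ⟨h.2, h.1⟩
    | Sum.inr x, Sum.inl y => exact ⟨h.2, h.1⟩
  loopless := by
    constructor
    intro a h
    match a with
    | Sum.inl x => exact G.loopless.irrefl x h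
    | Sum.inr x => exact H.loopless.irrefl x h


lemma addLeaf_nbr_none {V : Type*} (G : SimpleGraph V) (v : V) :
    (addLeaf G v).neighborSet none = {some v} := by
  ext x
  cases x with
  | none => simp [SimpleGraph.neighborSet, addLeaf]
  | some y => simp [SimpleGraph.neighborSet, addLeaf]

lemma addLeaf_inter_nbr {V : Type*} (G : SimpleGraph V) (v : V) (S : Set V) (u : V) :
    (some '' S) ∩ (addLeaf G v).neighborSet (some u) = some '' (S ∩ G.neighborSet u) := by
  ext x
  cases x with
  | none => simp [SimpleGraph.neighborSet, addLeaf]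
  | some y => simp [SimpleGraph.neighborSet, addLeaf]

lemma ncard_some_image {V : Type*} (S : Set V) :
    (some '' S : Set (Option V)).ncard = S.ncard :=
  Set.ncard_image_of_injective _ (Option.some_injective V)


theorem statement12 {V : Type*} [Fintype V] [Nontrivial V] (G : SimpleGraph V)
    (v : V) (S' : Set (Option V)) :
    (TypeISet (addLeaf G v) none S' ∧ HasLabel (addLeaf G v) none S' (-1)) ↔
      ∃ S : Set V, S' = some '' S ∧ TypeISet G v S ∧ HasLabel G v S 1 := by
  have hinj := Option.some_injective V
  constructor
  · rintro ⟨⟨hind, hmid, _⟩, hlab⟩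
    have hext : (none : Option V) ∉ S' ∧ S' ∩ (addLeaf G v).neighborSet none = ∅ ∧
        ∀ u ∈ (addLeaf G v).neighborSet none, (S' ∩ (addLeaf G v).neighborSet u).ncard = 1 := by
      rcases hlab with ⟨_, h⟩ | ⟨_, k, hk, _, h⟩ | ⟨h1, h2, h3, _⟩ | ⟨_, _, _, h⟩
      · omega
      · omega
      · exact ⟨h1, h2, h3⟩
      · omega
    obtain ⟨hnone, hempty, hcount⟩ := hext
    rw [addLeaf_nbr_none] at hempty hcount
    have hsv : some v ∉ S' := by
      intro h
      have : some v ∈ S' ∩ {some v} := ⟨h, rfl⟩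
      rw [hempty] at this
      exact this
    have hcv : (S' ∩ (addLeaf G v).neighborSet (some v)).ncard = 1 := hcount (some v) rfl
    set S : Set V := {x | some x ∈ S'} with hS
    have heq : S' = some '' S := by
      ext x
      cases x with
      | none => simp [hnone]
      | some y => simp [hS]
    have hiv : ∀ u : V, (S ∩ G.neighborSet u).ncard = (S' ∩ (addLeaf G v).neighborSet (some u)).ncard := by
      intro u
      rw [heq, addLeaf_inter_nbr, ncard_some_image]
    have hvS : v ∉ S := hsv
    refine ⟨S, heq, ⟨?_, ?_, ?_⟩, ?_⟩
    · intro a ha b hb hab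
      exact hind (some a) ha (some b) hb hab
    · intro u hu huv
      rw [hiv u]
      exact hmid (some u) hu (by simp)
    · right; rw [hiv v, hcv]; norm_num
    · exact Or.inr (Or.inl ⟨hvS, 1, le_refl 1, by rw [hiv v]; exact hcv, rfl⟩)
  · rintro ⟨S, rfl, ⟨hind, hmid, _⟩, hlab⟩
    have hext : v ∉ S ∧ (S ∩ G.neighborSet v).ncard = 1 := by
      rcases hlab with ⟨_, h⟩ | ⟨h1, k, hk, h2, h3⟩ | ⟨_, _, _, h⟩ | ⟨_, _, _, h⟩
      · omega
      · refine ⟨h1, ?_⟩; rw [h2]; omega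
      · omega
      · omega
    obtain ⟨hvS, hcv⟩ := hext
    have hnone : (none : Option V) ∉ some '' S := by simp
    have hsv : some v ∉ (some '' S : Set (Option V)) := by
      simp [hvS]
    have hiv : ∀ u : V, ((some '' S : Set (Option V)) ∩ (addLeaf G v).neighborSet (some u)).ncard = (S ∩ G.neighborSet u).ncard := by
      intro u
      rw [addLeaf_inter_nbr, ncard_some_image]
    have hemptyn : (some '' S : Set (Option V)) ∩ (addLeaf G v).neighborSet none = ∅ := by
      rw [addLeaf_nbr_none]
      ext x
      simp only [Set.mem_inter_iff, Set.mem_singleton_iff, Set.mem_empty_iff_false, iff_false,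
        not_and]
      rintro hx rfl
      exact hsv hx
    constructor
    · refine ⟨?_, ?_, ?_⟩
      · rintro a ha b hb hab
        cases a with
        | none => exact hnone ha
        | some x => cases b with
          | none => exact hnone hb
          | some y =>
            have hx : x ∈ S := by simpa using ha
            have hy : y ∈ S := by simpa using hb
            exact hind x hx y hy hab
      · intro u hu hun
        cases u with
        | none => exact absurd rfl hun
        | some x =>
          rw [hiv x]
          by_cases hxv : x = v
          · subst hxv
            rw [hcv]; omega
          · exact hmid x (fun h => hu (Set.mem_image_of_mem _ h)) hxv
      · right
        rw [hemptyn]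
        simp
    · refine Or.inr (Or.inr (Or.inl ⟨hnone, hemptyn, ?_, rfl⟩))
      rw [addLeaf_nbr_none]
      rintro u rfl
      rw [hiv v]
      exact hcv
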